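/- For an odd prime p and any k with 2 ≤ k ≤ p-1, the number of partitions into exactly k parts, each part of size at most p-1, of a number congruent to i mod p, is the same for all residues i mod p. -/

import Mathlib

/-- The number of partitions into exactly k parts, each of size at least 1 and at
most L, of a number congruent to i mod p. -/
def exactPartCount (k L p i : ℕ) : ℕ :=
  ((Finset.univ : Finset (Fin k → Fin (L + 1))).filter
    (fun f => (∀ a b : Fin k, a ≤ b → (f b : ℕ) ≤ (f a : ℕ)) ∧
      (∀ a, 0 < (f a : ℕ)) ∧ (∑ a, (f a : ℕ)) % p = i)).card

open Finset

section Aux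

variable (p : ℕ) [NeZero p]

/-- Number of multisets of size `k` over `ZMod p` with sum `i`. -/
def symCnt (k : ℕ) (i : ZMod p) : ℕ :=
  ((Finset.univ : Finset (Sym (ZMod p) k)).filter
    (fun s : Sym (ZMod p) k => (s : Multiset (ZMod p)).sum = i)).card

/-- Number of multisets of size `k` over `ZMod p` with sum `i`, avoiding `0`. -/
def symCnt0 (k : ℕ) (i : ZMod p) : ℕ :=
  ((Finset.univ : Finset (Sym (ZMod p) k)).filter
    (fun s : Sym (ZMod p) k => (s : Multiset (ZMod p)).sum = i ∧
      ¬ ((0 : ZMod p) ∈ (s : Multiset (ZMod p))))).card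

omit [NeZero p] in
lemma sum_map_add_const (m : Multiset (ZMod p)) (c : ZMod p) :
    (m.map (· + c)).sum = m.sum + (Multiset.card m) • c := by
  induction m using Multiset.induction_on with
  | empty => simp
  | cons a m ih =>
      simp only [Multiset.map_cons, Multiset.sum_cons, ih, Multiset.card_cons, succ_nsmul]
      ring

lemma symCnt_translate (k : ℕ) (i c : ZMod p) :
    symCnt p k i = symCnt p k (i + k • c) := by
  unfold symCnt
  apply Finset.card_nbij' (fun s => s.map (· + c)) (fun s => s.map (· + (-c)))
  · intro s hs
    simp only [Finset.mem_coe, mem_filter, mem_univ, true_and] at hs ⊢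
    have hcard : Multiset.card (s : Multiset (ZMod p)) = k := s.2
    rw [Sym.coe_map, sum_map_add_const, hs, hcard]
  · intro s hs
    simp only [Finset.mem_coe, mem_filter, mem_univ, true_and] at hs ⊢
    have hcard : Multiset.card (s : Multiset (ZMod p)) = k := s.2
    rw [Sym.coe_map, sum_map_add_const, hs, hcard, smul_neg]
    abel
  · intro s hs
    beta_reduce
    rw [Sym.map_map]
    rw [show ((fun x : ZMod p => x + -c) ∘ (fun x : ZMod p => x + c)) = fun x => x by
      funext x; simp only [Function.comp_apply]; ring]
    exact Sym.map_id' s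
  · intro s hs
    beta_reduce
    rw [Sym.map_map]
    rw [show ((fun x : ZMod p => x + c) ∘ (fun x : ZMod p => x + -c)) = fun x => x by
      funext x; simp only [Function.comp_apply]; ring]
    exact Sym.map_id' s

lemma symCnt_const (hp : p.Prime) (k : ℕ) (hk : (k : ZMod p) ≠ 0) (i j : ZMod p) :
    symCnt p k i = symCnt p k j := by
  haveI : Fact p.Prime := ⟨hp⟩
  have h := symCnt_translate p k i ((k : ZMod p)⁻¹ * (j - i))
  have hc : i + (k : ℕ) • ((k : ZMod p)⁻¹ * (j - i)) = j := by
    rw [nsmul_eq_mul, ← mul_assoc, mul_inv_cancel₀ hk, one_mul]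
    ring
  rwa [hc] at h

lemma symCnt_succ (k : ℕ) (i : ZMod p) :
    symCnt p (k + 1) i = symCnt0 p (k + 1) i + symCnt p k i := by
  unfold symCnt symCnt0
  rw [← Finset.card_filter_add_card_filter_not
      (s := Finset.univ.filter fun s : Sym (ZMod p) (k+1) => (s : Multiset (ZMod p)).sum = i)
      (p := fun s : Sym (ZMod p) (k+1) => (0 : ZMod p) ∈ (s : Multiset (ZMod p)))]
  rw [Finset.filter_filter, Finset.filter_filter, add_comm]
  congr 1
  -- the multisets containing 0 with sum i correspond to multisets of size k with sum i
  symm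
  apply Finset.card_bij (fun (t : Sym (ZMod p) k) _ => (0 : ZMod p) ::ₛ t)
  · intro t ht
    simp only [mem_filter, mem_univ, true_and] at ht ⊢
    refine ⟨?_, ?_⟩
    · show (Multiset.sum ((0 : ZMod p) ::ₘ (t : Multiset (ZMod p)))) = i
      rw [Multiset.sum_cons, zero_add, ht]
    · exact Multiset.mem_cons_self 0 _
  · intro t1 h1 t2 h2 heq
    exact (Sym.cons_inj_right _ _ _).mp heq
  · intro s hs
    simp only [mem_filter, mem_univ, true_and] at hs
    obtain ⟨hsum, h0⟩ := hs
    refine ⟨s.erase 0 h0, ?_, ?_⟩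
    · simp only [mem_filter, mem_univ, true_and]
      have hc : (0 : ZMod p) ::ₘ ((s : Multiset (ZMod p)).erase 0) = (s : Multiset (ZMod p)) :=
        Multiset.cons_erase h0
      have h3 := congrArg Multiset.sum hc
      rw [Multiset.sum_cons, zero_add] at h3
      rw [show ((s.erase 0 h0 : Sym (ZMod p) k) : Multiset (ZMod p))
          = (s : Multiset (ZMod p)).erase 0 from rfl, h3, hsum]
    · apply Subtype.ext
      show (0 : ZMod p) ::ₘ ((s : Multiset (ZMod p)).erase 0) = (s : Multiset (ZMod p))
      exact Multiset.cons_erase h0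

end Aux

lemma mod_eq_iff_cast_eq (p m i : ℕ) (hi : i < p) :
    m % p = i ↔ (m : ZMod p) = (i : ZMod p) := by
  rw [ZMod.natCast_eq_natCast_iff', Nat.mod_eq_of_lt hi]

lemma exactPartCount_eq_symCnt0 (p : ℕ) [NeZero p] (k i : ℕ) (hi : i < p) :
    exactPartCount k (p - 1) p i = symCnt0 p k (i : ZMod p) := by
  have hp1 : 0 < p := Nat.pos_of_ne_zero (NeZero.ne p)
  have hsp : p - 1 + 1 = p := Nat.succ_pred_eq_of_pos hp1
  unfold exactPartCount symCnt0
  apply Finset.card_bij (β := Sym (ZMod p) k)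
    (fun (f : Fin k → Fin (p - 1 + 1)) _ =>
      (⟨Multiset.map (fun a => ((f a : ℕ) : ZMod p)) Finset.univ.val, by simp⟩ :
        Sym (ZMod p) k))
  · intro f hf
    simp only [mem_filter, mem_univ, true_and] at hf ⊢
    obtain ⟨hanti, hpos, hsum⟩ := hf
    refine Finset.mem_filter.mpr ⟨Finset.mem_univ _, ?_⟩
    constructor
    · show (Multiset.map (fun a => ((f a : ℕ) : ZMod p)) Finset.univ.val).sum = _
      have h1 : (Multiset.map (fun a => ((f a : ℕ) : ZMod p)) Finset.univ.val).sum
          = ∑ a, ((f a : ℕ) : ZMod p) := rfl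
      rw [h1, ← Nat.cast_sum]
      exact (mod_eq_iff_cast_eq p _ i hi).mp hsum
    · intro h0
      have h0x : (0 : ZMod p) ∈ Multiset.map (fun a => ((f a : ℕ) : ZMod p))
          Finset.univ.val := h0
      obtain ⟨a, _, ha⟩ := Multiset.mem_map.mp h0x
      have hdvd : p ∣ (f a : ℕ) := (ZMod.natCast_eq_zero_iff _ p).mp ha
      have hlt : (f a : ℕ) < p := by have := (f a).2; omega
      have h2 := Nat.eq_zero_of_dvd_of_lt hdvd hlt
      have h3 := hpos a
      omega
  · intro f hf g hg heq
    simp only [mem_filter, mem_univ, true_and] at hf hg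
    have hmul : Multiset.map (fun a => ((f a : ℕ) : ZMod p)) Finset.univ.val
        = Multiset.map (fun a => ((g a : ℕ) : ZMod p)) Finset.univ.val := by
      have := congrArg Subtype.val heq
      exact this
    have hval : Multiset.map (fun a => (f a : ℕ)) Finset.univ.val
        = Multiset.map (fun a => (g a : ℕ)) Finset.univ.val := by
      have h2 := congrArg (Multiset.map ZMod.val) hmul
      rw [Multiset.map_map, Multiset.map_map] at h2
      have hf' : ∀ a ∈ (Finset.univ.val : Multiset (Fin k)),
          (ZMod.val ∘ fun a => (((f a : ℕ)) : ZMod p)) a = (f a : ℕ) := by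
        intro a _
        exact ZMod.val_natCast_of_lt (by have := (f a).2; omega)
      have hg' : ∀ a ∈ (Finset.univ.val : Multiset (Fin k)),
          (ZMod.val ∘ fun a => (((g a : ℕ)) : ZMod p)) a = (g a : ℕ) := by
        intro a _
        exact ZMod.val_natCast_of_lt (by have := (g a).2; omega)
      rwa [Multiset.map_congr rfl hf', Multiset.map_congr rfl hg'] at h2
    rw [Fin.univ_val_map, Fin.univ_val_map, Multiset.coe_eq_coe] at hval
    have hs1 : (List.ofFn (fun a => (f a : ℕ))).Pairwise (· ≥ ·) := by
      rw [List.pairwise_ofFn]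
      intro a b hab
      exact hf.1 a b hab.le
    have hs2 : (List.ofFn (fun a => (g a : ℕ))).Pairwise (· ≥ ·) := by
      rw [List.pairwise_ofFn]
      intro a b hab
      exact hg.1 a b hab.le
    have heqfn := List.Perm.eq_of_pairwise' hs1 hs2 hval
    rw [List.ofFn_inj] at heqfn
    funext a
    exact Fin.ext (congrFun heqfn a)
  · intro s hs
    simp only [mem_filter, mem_univ, true_and] at hs
    obtain ⟨hsum, h0⟩ := hs
    set m : Multiset ℕ := (s : Multiset (ZMod p)).map ZMod.val with hm
    set l : List ℕ := Multiset.sort m (· ≥ ·) with hldef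
    have hl : l.length = k := by
      rw [hldef, Multiset.length_sort, hm, Multiset.card_map]
      exact s.2
    have hmem : ∀ x ∈ l, x < p ∧ x ≠ 0 := by
      intro x hx
      rw [hldef, Multiset.mem_sort, hm, Multiset.mem_map] at hx
      obtain ⟨z, hz, rfl⟩ := hx
      refine ⟨ZMod.val_lt z, ?_⟩
      intro hzero
      exact h0 ((ZMod.val_eq_zero z).mp hzero ▸ hz)
    -- the multiset m mapped back into ZMod p is s
    have hback : Multiset.map (fun n : ℕ => (n : ZMod p)) m = (s : Multiset (ZMod p)) := by
      rw [hm, Multiset.map_map]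
      have : ∀ z ∈ (s : Multiset (ZMod p)),
          ((fun n : ℕ => (n : ZMod p)) ∘ ZMod.val) z = id z := by
        intro z _
        show ((z.val : ℕ) : ZMod p) = z
        rw [ZMod.natCast_val, ZMod.cast_id]
      rw [Multiset.map_congr rfl this, Multiset.map_id]
    have hlsum : l.sum = m.sum := by
      have h4 := congrArg Multiset.sum (Multiset.sort_eq m (· ≥ ·))
      rwa [Multiset.sum_coe] at h4
    refine ⟨fun a => ⟨l.get (Fin.cast hl.symm a), ?_⟩, ?_, ?_⟩
    · rw [hsp]
      exact (hmem _ (l.get_mem _)).1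
    · simp only [mem_filter, mem_univ, true_and]
      refine ⟨?_, ?_, ?_⟩
      · intro a b hab
        exact (Multiset.pairwise_sort m (· ≥ ·)).rel_get_of_le
          (show Fin.cast hl.symm a ≤ Fin.cast hl.symm b from hab)
      · intro a
        exact Nat.pos_of_ne_zero (hmem _ (l.get_mem _)).2
      · show (∑ a : Fin k, l.get (Fin.cast hl.symm a)) % p = i
        have hsum2 : (∑ a : Fin k, l.get (Fin.cast hl.symm a)) = l.sum := by
          rw [Fin.sum_congr' l.get hl.symm]
          conv_rhs => rw [← List.ofFn_get l]
          rw [List.sum_ofFn]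
        rw [hsum2, hlsum, mod_eq_iff_cast_eq p _ i hi]
        have h5 : ((m.sum : ℕ) : ZMod p) = (Multiset.map (fun n : ℕ => (n : ZMod p)) m).sum :=
          Nat.cast_multiset_sum m
        rw [h5, hback]
        exact hsum
    · apply Subtype.ext
      show Multiset.map (fun a : Fin k => ((l.get (Fin.cast hl.symm a) : ℕ) : ZMod p))
          Finset.univ.val = (s : Multiset (ZMod p))
      rw [Fin.univ_val_map]
      rw [show (List.ofFn fun a : Fin k => ((l.get (Fin.cast hl.symm a) : ℕ) : ZMod p))
          = List.ofFn (fun b : Fin l.length => ((l.get b : ℕ) : ZMod p)) from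
        (List.ofFn_congr hl (fun b : Fin l.length => ((l.get b : ℕ) : ZMod p))).symm]
      rw [show List.ofFn (fun b : Fin l.length => ((l.get b : ℕ) : ZMod p)) = l.map (fun n : ℕ => (n : ZMod p)) from by simp [List.ofFn_getElem_eq_map]]
      rw [← Multiset.map_coe, Multiset.sort_eq, hback]

theorem exactPartCount_eq (p k : ℕ) (hp : p.Prime) (hodd : Odd p)
    (h2 : 2 ≤ k) (hk : k ≤ p - 1) (i j : ℕ) (hi : i < p) (hj : j < p) :
    exactPartCount k (p - 1) p i = exactPartCount k (p - 1) p j := by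
  haveI : NeZero p := ⟨hp.ne_zero⟩
  have hp2 : 2 ≤ p := hp.two_le
  obtain ⟨m, rfl⟩ : ∃ m, k = m + 2 := ⟨k - 2, by omega⟩
  have hcast : ∀ t : ℕ, 0 < t → t < p → ((t : ZMod p) ≠ 0) := by
    intro t ht htp h
    have h6 := (ZMod.natCast_eq_zero_iff t p).mp h
    have := Nat.le_of_dvd ht h6
    omega
  have hkp : m + 2 < p := by omega
  have h1 : symCnt p (m + 2) (i : ZMod p) = symCnt p (m + 2) (j : ZMod p) :=
    symCnt_const p hp _ (by exact_mod_cast hcast (m + 2) (by omega) hkp) _ _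
  have h2' : symCnt p (m + 1) (i : ZMod p) = symCnt p (m + 1) (j : ZMod p) :=
    symCnt_const p hp _ (by exact_mod_cast hcast (m + 1) (by omega) (by omega)) _ _
  have e1 : symCnt p (m + 2) (i : ZMod p)
      = symCnt0 p (m + 2) (i : ZMod p) + symCnt p (m + 1) (i : ZMod p) :=
    symCnt_succ p (m + 1) (i : ZMod p)
  have e2 : symCnt p (m + 2) (j : ZMod p)
      = symCnt0 p (m + 2) (j : ZMod p) + symCnt p (m + 1) (j : ZMod p) :=
    symCnt_succ p (m + 1) (j : ZMod p)
  rw [exactPartCount_eq_symCnt0 p _ i hi, exactPartCount_eq_symCnt0 p _ j hj]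
  omega
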